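/- For every g ∈ G^c and every ζ = ξ + iη ∈ g^c, writing gζg⁻¹ = ξ' + iη' with ξ', η' ∈ g, one has |ξ'|² − |η'|² = |ξ|² − |η|² and ⟨ξ', η'⟩ = ⟨ξ, η⟩. Consequently, if ζ is conjugate under G^c to an element of g \ {0}, then |ξ| > |η| and ⟨ξ, η⟩ = 0. -/
import Mathlib
open Matrix

private lemma trace_sq_eq {n : ℕ} (ξ η : Matrix (Fin n) (Fin n) ℂ)
    (hξ : ξᴴ = -ξ) (hη : ηᴴ = -η) :
    ((ξ + Complex.I • η) * (ξ + Complex.I • η)).trace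
      = -(ξᴴ * ξ).trace + (ηᴴ * η).trace - 2 * Complex.I * (ξᴴ * η).trace := by
  have h1 : ξᴴ * ξ = -(ξ * ξ) := by rw [hξ, neg_mul]
  have h2 : ηᴴ * η = -(η * η) := by rw [hη, neg_mul]
  have h3 : ξᴴ * η = -(ξ * η) := by rw [hξ, neg_mul]
  rw [h1, h2, h3]
  have expand : (ξ + Complex.I • η) * (ξ + Complex.I • η)
      = ξ * ξ + Complex.I • (ξ * η) + Complex.I • (η * ξ) + (Complex.I * Complex.I) • (η * η) := by
    simp only [mul_add, add_mul, smul_mul_assoc, mul_smul_comm, smul_smul, smul_add]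
    abel
  rw [expand]
  simp only [trace_add, trace_smul, Complex.I_mul_I, trace_neg, neg_neg,
    trace_mul_comm η ξ, smul_eq_mul]
  ring

private lemma im_trace_conjTranspose_mul_self {n : ℕ} (A : Matrix (Fin n) (Fin n) ℂ) :
    (Aᴴ * A).trace.im = 0 := by
  have h : (starRingEnd ℂ) ((Aᴴ * A).trace) = (Aᴴ * A).trace := by
    have := Matrix.trace_conjTranspose (Aᴴ * A)
    rw [conjTranspose_mul, conjTranspose_conjTranspose] at this
    exact this.symm
  exact Complex.conj_eq_iff_im.mp h

private lemma im_trace_skew {n : ℕ} (ξ η : Matrix (Fin n) (Fin n) ℂ)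
    (hξ : ξᴴ = -ξ) (hη : ηᴴ = -η) : (ξᴴ * η).trace.im = 0 := by
  have h : (starRingEnd ℂ) ((ξᴴ * η).trace) = (ξᴴ * η).trace := by
    have h0 := Matrix.trace_conjTranspose (ξᴴ * η)
    rw [conjTranspose_mul, conjTranspose_conjTranspose] at h0
    rw [show (starRingEnd ℂ) ((ξᴴ * η).trace) = star ((ξᴴ * η).trace) from rfl, ← h0,
      hξ, hη, neg_mul, neg_mul, trace_neg, trace_neg, neg_inj, trace_mul_comm]
  exact Complex.conj_eq_iff_im.mp h

private lemma trace_pos {n : ℕ} (A : Matrix (Fin n) (Fin n) ℂ) (hA : A ≠ 0) :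
    0 < (Aᴴ * A).trace.re := by
  have h : (Aᴴ * A).trace.re = ∑ j, ∑ i, Complex.normSq (A i j) := by
    simp [Matrix.trace, Matrix.mul_apply, Matrix.diag, Matrix.conjTranspose_apply,
      ← Complex.normSq_eq_conj_mul_self]
  rw [h]
  obtain ⟨i, j, hij⟩ : ∃ i j, A i j ≠ 0 := by
    by_contra hc
    push_neg at hc
    exact hA (by ext i j; simp [hc i j])
  refine Finset.sum_pos' (fun j _ => Finset.sum_nonneg fun i _ => Complex.normSq_nonneg _) ?_
  exact ⟨j, Finset.mem_univ _, Finset.sum_pos' (fun i _ => Complex.normSq_nonneg _)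
    ⟨i, Finset.mem_univ _, Complex.normSq_pos.mpr hij⟩⟩

theorem stmt_4 {n : ℕ} (ξ η : Matrix (Fin n) (Fin n) ℂ)
    (hξ : ξᴴ = -ξ) (hη : ηᴴ = -η) :
    (∀ g ξ' η' : Matrix (Fin n) (Fin n) ℂ, IsUnit g →
      ξ'ᴴ = -ξ' → η'ᴴ = -η' →
      g * (ξ + Complex.I • η) * g⁻¹ = ξ' + Complex.I • η' →
      ((ξ'ᴴ * ξ').trace.re - (η'ᴴ * η').trace.re
          = (ξᴴ * ξ).trace.re - (ηᴴ * η).trace.re) ∧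
        (ξ'ᴴ * η').trace.re = (ξᴴ * η).trace.re) ∧
    ((∃ g ζ' : Matrix (Fin n) (Fin n) ℂ, IsUnit g ∧ ζ'ᴴ = -ζ' ∧ ζ' ≠ 0 ∧
        g * (ξ + Complex.I • η) * g⁻¹ = ζ') →
      (ηᴴ * η).trace.re < (ξᴴ * ξ).trace.re ∧ (ξᴴ * η).trace.re = 0) := by
  have main : ∀ g ξ' η' : Matrix (Fin n) (Fin n) ℂ, IsUnit g →
      ξ'ᴴ = -ξ' → η'ᴴ = -η' →
      g * (ξ + Complex.I • η) * g⁻¹ = ξ' + Complex.I • η' →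
      ((ξ'ᴴ * ξ').trace.re - (η'ᴴ * η').trace.re
          = (ξᴴ * ξ).trace.re - (ηᴴ * η).trace.re) ∧
        (ξ'ᴴ * η').trace.re = (ξᴴ * η).trace.re := by
    intro g ξ' η' hg hξ' hη' hgc
    set ζ := ξ + Complex.I • η with hζ
    have hinv : g⁻¹ * g = 1 := Matrix.nonsing_inv_mul g ((Matrix.isUnit_iff_isUnit_det g).mp hg)
    have htr : ((ξ' + Complex.I • η') * (ξ' + Complex.I • η')).trace = (ζ * ζ).trace := by
      rw [← hgc]
      have : g * ζ * g⁻¹ * (g * ζ * g⁻¹) = g * (ζ * ζ) * g⁻¹ := by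
        rw [show g * ζ * g⁻¹ * (g * ζ * g⁻¹) = g * ζ * (g⁻¹ * g) * ζ * g⁻¹ by
          simp only [mul_assoc], hinv, mul_one]; simp only [mul_assoc]
      rw [this, Matrix.trace_mul_cycle, ← mul_assoc, hinv, one_mul]
    rw [trace_sq_eq ξ' η' hξ' hη', trace_sq_eq ξ η hξ hη] at htr
    have hre := congrArg Complex.re htr
    have him := congrArg Complex.im htr
    simp only [Complex.sub_re, Complex.add_re, Complex.neg_re, Complex.sub_im, Complex.add_im,
      Complex.neg_im, Complex.mul_re, Complex.mul_im, Complex.I_re, Complex.I_im,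
      Complex.ofReal_re, Complex.ofReal_im, Complex.re_ofNat, Complex.im_ofNat,
      im_trace_conjTranspose_mul_self, im_trace_skew ξ η hξ hη, im_trace_skew ξ' η' hξ' hη']
      at hre him
    constructor
    · linarith
    · linarith
  refine ⟨main, ?_⟩
  rintro ⟨g, ζ', hg, hζ', hne, hgc⟩
  have h0 : (0 : Matrix (Fin n) (Fin n) ℂ)ᴴ = -0 := by simp
  have heq : g * (ξ + Complex.I • η) * g⁻¹ = ζ' + Complex.I • (0 : Matrix (Fin n) (Fin n) ℂ) := by
    simp [hgc]
  obtain ⟨h1, h2⟩ := main g ζ' 0 hg hζ' h0 heq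
  simp only [Matrix.mul_zero, Matrix.trace_zero, Complex.zero_re] at h1 h2
  have hpos := trace_pos ζ' hne
  exact ⟨by linarith, h2.symm⟩
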